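/- There is no 1-layer single-token output transformer with embedding dimension n^{o(1)} and output MLP with n^{o(1)} ReLU neurons that computes SUM₂^{n,n}. Precisely: let (T_n)_{n≥2, n even} be any sequence where T_n is a 1-layer single-token output transformer for input length n and alphabet {−n,…,n}, with embedding dimension d_n and whose output function 𝒩_n is a ReLU MLP with m_n ReLU neurons. If for every c > 0 one has d_n ≤ n^c and m_n ≤ n^c for all sufficiently large n, then there exists n such that T_n does not compute SUM₂^{n,n} (i.e., T_n(x) ≠ SUM₂^{n,n}(x) for some input x ∈ {−n,…,n}^n). -/

import Mathlib

/-- A 1-layer single-token output transformer of embedding dimension `d`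
for input length `n` and alphabet `S`: a positional encoding `p`, an initial
value vector `h` of the output token, key and query matrices `K`, `Q`,
and an output function `N`. -/
structure Transformer (n d : ℕ) (S : Type*) where
  /-- positional encoding -/
  p : Fin n → S → (Fin d → ℝ)
  /-- initial value vector of the output token -/
  h : Fin d → ℝ
  /-- key matrix -/
  K : Matrix (Fin d) (Fin d) ℝ
  /-- query matrix -/
  Q : Matrix (Fin d) (Fin d) ℝ
  /-- output function -/
  N : (Fin d → ℝ) → ℝ

/-- The attention weight `e^{⟨K f_i, Q h⟩}` of input token `i`, where `f_i = p(i, x_i)`. -/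
noncomputable def Transformer.w {n d : ℕ} {S : Type*} (T : Transformer n d S)
    (x : Fin n → S) (i : Fin n) : ℝ :=
  Real.exp (dotProduct (T.K.mulVec (T.p i (x i))) (T.Q.mulVec T.h))

/-- The output of the transformer on input `x`: it computes the softmax average
`ĥ = (Σ_i e^{⟨K f_i, Q h⟩} f_i) / (Σ_i e^{⟨K f_i, Q h⟩})` and outputs `1` if
`N (h + ĥ) > 0`, and `0` otherwise. -/
noncomputable def Transformer.output {n d : ℕ} {S : Type*} (T : Transformer n d S)
    (x : Fin n → S) : ℕ :=
  if 0 < T.N (T.h + (∑ i, T.w x i)⁻¹ • ∑ i, T.w x i • T.p i (x i)) then 1 else 0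

/-- `IsMLP din dout F m` : the function `F : ℝ^din → ℝ^dout` is computable by a
feedforward circuit composing affine maps over `ℝ` and the coordinatewise ReLU
activation `t ↦ max (t, 0)`, using `m` ReLU gates in total. -/
inductive IsMLP : (din dout : ℕ) → ((Fin din → ℝ) → (Fin dout → ℝ)) → ℕ → Prop
  | affine {din dout : ℕ} (A : Matrix (Fin dout) (Fin din) ℝ) (b : Fin dout → ℝ) :
      IsMLP din dout (fun x => A.mulVec x + b) 0
  | relu (d : ℕ) : IsMLP d d (fun x i => max (x i) 0) d
  | comp {d₁ d₂ d₃ m₁ m₂ : ℕ} {f : (Fin d₁ → ℝ) → (Fin d₂ → ℝ)}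
      {g : (Fin d₂ → ℝ) → (Fin d₃ → ℝ)} :
      IsMLP d₁ d₂ f m₁ → IsMLP d₂ d₃ g m₂ → IsMLP d₁ d₃ (g ∘ f) (m₁ + m₂)

/-- `N : ℝ^d → ℝ` is a ReLU MLP with `m` ReLU neurons. -/
def IsReLUMLP (d m : ℕ) (N : (Fin d → ℝ) → ℝ) : Prop :=
  ∃ F : (Fin d → ℝ) → (Fin 1 → ℝ), IsMLP d 1 F m ∧ ∀ v, N v = F v 0

/-- The function `SUM₂^{n,m}` (here with the bound `m` left implicit in the type `ℤ`):
it outputs `1` if there exist `i, j` with `a i + a j = 0`, and `0` otherwise. -/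
def sum2 {n : ℕ} (a : Fin n → ℤ) : ℕ :=
  if ∃ i j : Fin n, a i + a j = 0 then 1 else 0

open Matrix

def CtrHolds {din : ℕ} (u : Fin din → ℝ) (c : (Fin din → ℝ) × ℝ × Bool) : Prop :=
  if c.2.2 then c.1 ⬝ᵥ u ≤ c.2.1 else c.2.1 < c.1 ⬝ᵥ u

def PieceReg {din : ℕ} (L : List ((Fin din → ℝ) × ℝ × Bool)) (u : Fin din → ℝ) : Prop :=
  ∀ c ∈ L, CtrHolds u c

theorem IsMLP.pieces {din dout F m} (h : IsMLP din dout F m) :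
    ∃ (ι : Type) (_ : Fintype ι)
      (L : ι → List ((Fin din → ℝ) × ℝ × Bool))
      (A : ι → Matrix (Fin dout) (Fin din) ℝ) (b : ι → Fin dout → ℝ),
      Fintype.card ι ≤ 2 ^ m ∧ (∀ j, (L j).length ≤ m) ∧
      (∀ u, ∃ j, PieceReg (L j) u) ∧
      (∀ j u, PieceReg (L j) u → F u = (A j).mulVec u + b j) := by
  induction h with
  | affine A b =>
      exact ⟨PUnit, inferInstance, fun _ => [], fun _ => A, fun _ => b, by simp, by simp,
        fun u => ⟨PUnit.unit, by simp [PieceReg]⟩, fun _ u _ => rfl⟩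
  | relu d =>
      refine ⟨Fin d → Bool, inferInstance,
        fun τ => List.ofFn (fun i => (Pi.single i (1:ℝ), 0, τ i)),
        fun τ => Matrix.diagonal (fun i => if τ i then 0 else 1),
        fun _ => 0, by simp, by simp, ?_, ?_⟩
      · intro u
        refine ⟨fun i => decide (u i ≤ 0), ?_⟩
        intro c hc
        obtain ⟨i, rfl⟩ := List.mem_ofFn.mp hc
        by_cases h : u i ≤ 0 <;>
          simp [CtrHolds, single_dotProduct, h, lt_of_not_ge]
      · intro τ u hreg
        funext i
        have hmem : (Pi.single i (1:ℝ), (0:ℝ), τ i) ∈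
            List.ofFn (fun k => (Pi.single k (1:ℝ), (0:ℝ), τ k)) :=
          List.mem_ofFn.mpr ⟨i, rfl⟩
        have hct := hreg _ hmem
        simp only [CtrHolds, single_dotProduct, one_mul] at hct
        have hmv : (Matrix.diagonal (fun k => if τ k then (0:ℝ) else 1)).mulVec u i
            = (if τ i then (0:ℝ) else 1) * u i := by
          simp [Matrix.mulVec_diagonal]
        cases hτ : τ i
        · simp only [hτ] at hct hmv
          simp only [Pi.add_apply, hmv, Pi.zero_apply, add_zero] at *
          simpa using le_of_lt (show (0:ℝ) < u i by simpa using hct)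
        · simp only [hτ] at hct hmv
          simp only [Pi.add_apply, hmv, Pi.zero_apply, add_zero] at *
          simpa using (show u i ≤ 0 by simpa using hct)
  | @comp d₁ d₂ d₃ m₁ m₂ f g h1 h2 ih1 ih2 =>
      obtain ⟨ι₁, _, L₁, A₁, b₁, hc₁, hl₁, hcov₁, hval₁⟩ := ih1
      obtain ⟨ι₂, _, L₂, A₂, b₂, hc₂, hl₂, hcov₂, hval₂⟩ := ih2
      have trkey : ∀ (j₁ : ι₁) (c : (Fin _ → ℝ) × ℝ × Bool) (u : Fin _ → ℝ),
          CtrHolds u ((A₁ j₁).vecMul c.1, c.2.1 - c.1 ⬝ᵥ (b₁ j₁), c.2.2) ↔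
          CtrHolds ((A₁ j₁).mulVec u + b₁ j₁) c := by
        intro j₁ c u
        have key : ((A₁ j₁).vecMul c.1) ⬝ᵥ u + c.1 ⬝ᵥ (b₁ j₁)
            = c.1 ⬝ᵥ ((A₁ j₁).mulVec u + b₁ j₁) := by
          rw [dotProduct_add, Matrix.dotProduct_mulVec]
        simp only [CtrHolds]
        by_cases hb : c.2.2 = true
        · rw [if_pos hb, if_pos hb, le_sub_iff_add_le, key]
        · rw [if_neg hb, if_neg hb, sub_lt_iff_lt_add, key]
      refine ⟨ι₁ × ι₂, inferInstance,
        fun j => L₁ j.1 ++ (L₂ j.2).map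
          (fun c => ((A₁ j.1).vecMul c.1, c.2.1 - c.1 ⬝ᵥ (b₁ j.1), c.2.2)),
        fun j => A₂ j.2 * A₁ j.1,
        fun j => (A₂ j.2).mulVec (b₁ j.1) + b₂ j.2, ?_, ?_, ?_, ?_⟩
      · rw [Fintype.card_prod, pow_add]
        exact Nat.mul_le_mul hc₁ hc₂
      · intro j
        rw [List.length_append, List.length_map]
        exact Nat.add_le_add (hl₁ j.1) (hl₂ j.2)
      · intro u
        obtain ⟨j₁, hj₁⟩ := hcov₁ u
        obtain ⟨j₂, hj₂⟩ := hcov₂ ((A₁ j₁).mulVec u + b₁ j₁)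
        refine ⟨(j₁, j₂), ?_⟩
        intro c hc
        rcases List.mem_append.mp hc with hc | hc
        · exact hj₁ c hc
        · obtain ⟨c', hc', rfl⟩ := List.mem_map.mp hc
          exact (trkey j₁ c' u).mpr (hj₂ c' hc')
      · intro j u hreg
        have hreg₁ : PieceReg (L₁ j.1) u := fun c hc => hreg c (List.mem_append.mpr (Or.inl hc))
        have hfu : f u = (A₁ j.1).mulVec u + b₁ j.1 := hval₁ j.1 u hreg₁
        have hreg₂ : PieceReg (L₂ j.2) (f u) := by
          intro c hc
          have := hreg _ (List.mem_append.mpr (Or.inr (List.mem_map.mpr ⟨c, hc, rfl⟩)))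
          rw [trkey j.1 c u] at this
          rwa [hfu]
        have hgu : g (f u) = (A₂ j.2).mulVec (f u) + b₂ j.2 := hval₂ j.2 (f u) hreg₂
        show g (f u) = _
        rw [hgu, hfu, Matrix.mulVec_add, Matrix.mulVec_mulVec, add_assoc]

theorem IsReLUMLP.sign_det {dd mm : ℕ} {N : (Fin dd → ℝ) → ℝ} (h : IsReLUMLP dd mm N) :
    ∃ (ι : Type) (_ : Fintype ι) (W : ι × Fin (mm+1) → (Fin dd → ℝ) × ℝ),
      Fintype.card ι ≤ 2 ^ mm ∧
      ∀ z z', (∀ ji, ((W ji).1 ⬝ᵥ z ≤ (W ji).2 ↔ (W ji).1 ⬝ᵥ z' ≤ (W ji).2)) →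
        (0 < N z ↔ 0 < N z') := by
  obtain ⟨F, hF, hNF⟩ := h
  obtain ⟨ι, hfin, L, A, b, hcard, hlen, hcov, hval⟩ := hF.pieces
  refine ⟨ι, hfin,
    fun ji => if hi : (ji.2 : ℕ) < (L ji.1).length
      then (((L ji.1).get ⟨ji.2, hi⟩).1, ((L ji.1).get ⟨ji.2, hi⟩).2.1)
      else (fun c => A ji.1 0 c, -(b ji.1 0)), hcard, ?_⟩
  intro z z' hsig
  obtain ⟨j, hj⟩ := hcov z
  have hj' : PieceReg (L j) z' := by
    intro c hc
    obtain ⟨idx, hidx⟩ := List.mem_iff_get.mp hc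
    have hlt : (idx : ℕ) < mm + 1 := lt_of_lt_of_le idx.2 (le_trans (hlen j) (Nat.le_succ mm))
    have hs := hsig (j, ⟨idx, hlt⟩)
    dsimp only at hs
    rw [dif_pos (show ((⟨(idx : ℕ), hlt⟩ : Fin (mm+1)) : ℕ) < (L j).length from idx.2)] at hs
    simp only [Fin.eta, hidx] at hs
    have hcz := hj c hc
    unfold CtrHolds at hcz ⊢
    by_cases hb : c.2.2 = true
    · rw [if_pos hb] at hcz ⊢; exact hs.mp hcz
    · rw [if_neg hb] at hcz ⊢
      rw [← not_le] at hcz ⊢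
      exact fun hle => hcz (hs.mpr hle)
  have hvz : N z = (fun c => A j 0 c) ⬝ᵥ z + b j 0 := by
    rw [hNF, hval j z hj]; rfl
  have hvz' : N z' = (fun c => A j 0 c) ⬝ᵥ z' + b j 0 := by
    rw [hNF, hval j z' hj']; rfl
  have hnl : ¬ (((Fin.last mm : Fin (mm+1)) : ℕ) < (L j).length) := by
    simp only [Fin.val_last]
    exact Nat.not_lt.mpr (hlen j)
  have hs := hsig (j, Fin.last mm)
  dsimp only at hs
  rw [dif_neg hnl] at hs
  simp only at hs
  rw [hvz, hvz']
  constructor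
  · intro h0
    by_contra hno
    push_neg at hno
    have : (fun c => A j 0 c) ⬝ᵥ z' ≤ -(b j 0) := by linarith
    have := hs.mpr this
    linarith
  · intro h0
    by_contra hno
    push_neg at hno
    have : (fun c => A j 0 c) ⬝ᵥ z ≤ -(b j 0) := by linarith
    have := hs.mp this
    linarith

theorem pattern_count {dd : ℕ} {α : Type} [Fintype α] [DecidableEq α]
    (A : α → ((Fin dd → ℝ) × ℝ × ℝ)) (𝒜 : Finset (Finset α))
    (h𝒜 : ∀ S ∈ 𝒜, ∃ u : (Fin dd → ℝ) × ℝ,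
      ∀ a : α, a ∈ S ↔ (A a).1 ⬝ᵥ u.1 + u.2 * (A a).2.1 + (A a).2.2 ≤ 0) :
    𝒜.card ≤ (dd + 3) * (Fintype.card α + 1) ^ (dd + 2) := by
  have h1 : 𝒜.card ≤ 𝒜.shatterer.card := Finset.card_le_card_shatterer 𝒜
  have hvc : ∀ s ∈ 𝒜.shatterer, s.card ≤ dd + 2 := by
    intro s hs
    rw [Finset.mem_shatterer] at hs
    by_contra hbig
    push_neg at hbig
    obtain ⟨s', hs'sub, hs'card⟩ := Finset.exists_subset_card_eq (n := dd + 3) hbig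
    have hshat : 𝒜.Shatters s' := hs.mono_right hs'sub
    set t := s'.image A with ht
    rcases lt_or_ge t.card s'.card with hlt | hge
    · obtain ⟨a, ha, b2, hb2, hne, habA⟩ :=
        Finset.exists_ne_map_eq_of_card_lt_of_maps_to hlt
          (fun a ha => Finset.mem_image_of_mem A ha)
      obtain ⟨P, hP, hPint⟩ := hshat (show {a} ⊆ s' by simpa using ha)
      obtain ⟨u, hu⟩ := h𝒜 P hP
      have haP : a ∈ P := by
        have : a ∈ s' ∩ P := by rw [hPint]; exact Finset.mem_singleton_self a
        exact (Finset.mem_inter.mp this).2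
      have hbP : b2 ∉ P := by
        intro hbP
        have : b2 ∈ s' ∩ P := Finset.mem_inter.mpr ⟨hb2, hbP⟩
        rw [hPint] at this
        exact hne (Finset.mem_singleton.mp this).symm
      rw [hu] at haP
      rw [hu] at hbP
      rw [habA] at haP
      exact hbP haP
    · have hinj : Set.InjOn A s' := by
        rw [← Finset.card_image_iff]
        exact le_antisymm (Finset.card_image_le) hge |>.symm ▸ rfl
      have hfr : Module.finrank ℝ ((Fin dd → ℝ) × ℝ × ℝ) < t.card := by
        have hrk : Module.finrank ℝ ((Fin dd → ℝ) × ℝ × ℝ) = dd + 2 := by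
          simp [Module.finrank_prod, Module.finrank_pi, Module.finrank_self]
        have : t.card = dd + 3 := by
          rw [ht, Finset.card_image_iff.mpr hinj, hs'card]
        omega
      obtain ⟨f, hfsum, x, hx, hfx⟩ :=
        Module.exists_nontrivial_relation_of_finrank_lt_card hfr
      obtain ⟨ax, hax, haxe⟩ := Finset.mem_image.mp hx
      obtain ⟨g, hgsum, a₀, ha₀, hga₀⟩ :
          ∃ g : ((Fin dd → ℝ) × ℝ × ℝ) → ℝ,
            ∑ e ∈ t, g e • e = 0 ∧ ∃ a₀ ∈ s', 0 < g (A a₀) := by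
        rcases lt_trichotomy (f x) 0 with hneg | hzero | hposx
        · refine ⟨-f, ?_, ax, hax, ?_⟩
          · have : ∑ e ∈ t, (-f) e • e = -∑ e ∈ t, f e • e := by
              simp [neg_smul]
            rw [this, hfsum, neg_zero]
          · simp only [Pi.neg_apply, haxe]
            linarith
        · exact absurd hzero hfx
        · exact ⟨f, hfsum, ax, hax, by rw [haxe]; exact hposx⟩
      obtain ⟨P, hP, hPint⟩ := hshat (Finset.filter_subset (fun a => g (A a) ≤ 0) s')
      obtain ⟨u₀, hu₀⟩ := h𝒜 P hP
      set Λ : ((Fin dd → ℝ) × ℝ × ℝ) →ₗ[ℝ] ℝ :=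
        { toFun := fun e => e.1 ⬝ᵥ u₀.1 + u₀.2 * e.2.1 + e.2.2
          map_add' := by
            intro e e'
            simp [add_dotProduct]
            ring
          map_smul' := by
            intro c e
            simp [smul_dotProduct, smul_eq_mul]
            ring } with hΛ
      have h0 : ∑ e ∈ t, g e * Λ e = 0 := by
        have hc := congrArg Λ hgsum
        rw [map_sum, map_zero] at hc
        simpa [_root_.map_smul, smul_eq_mul] using hc
      have h0' : ∑ a ∈ s', g (A a) * Λ (A a) = 0 := by
        rw [ht, Finset.sum_image (fun x hx y hy h => hinj hx hy h)] at h0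
        exact h0
      have hmem_iff : ∀ a ∈ s', (a ∈ P ↔ Λ (A a) ≤ 0) := by
        intro a _
        rw [hu₀ a]
        constructor <;> intro h <;> exact h
      have hfilter_iff : ∀ a ∈ s', (g (A a) ≤ 0 ↔ a ∈ P) := by
        intro a ha
        constructor
        · intro hg
          have hat : a ∈ s'.filter (fun a => g (A a) ≤ 0) :=
            Finset.mem_filter.mpr ⟨ha, hg⟩
          rw [← hPint] at hat
          exact (Finset.mem_inter.mp hat).2
        · intro hPa
          have : a ∈ s' ∩ P := Finset.mem_inter.mpr ⟨ha, hPa⟩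
          rw [hPint] at this
          exact (Finset.mem_filter.mp this).2
      have hpos_sum : 0 < ∑ a ∈ s', g (A a) * Λ (A a) := by
        refine Finset.sum_pos' ?_ ⟨a₀, ha₀, ?_⟩
        · intro a ha
          rcases le_or_gt (g (A a)) 0 with hg | hg
          · have hPa : a ∈ P := (hfilter_iff a ha).mp hg
            have hΛa : Λ (A a) ≤ 0 := (hmem_iff a ha).mp hPa
            nlinarith
          · have hPa : a ∉ P := fun hPa => absurd ((hfilter_iff a ha).mpr hPa) (not_le.mpr hg)
            have hΛa : 0 < Λ (A a) := by
              by_contra hno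
              push_neg at hno
              exact hPa ((hmem_iff a ha).mpr hno)
            exact (mul_pos hg hΛa).le
        · have hPa : a₀ ∉ P := fun hPa => absurd ((hfilter_iff a₀ ha₀).mpr hPa) (not_le.mpr hga₀)
          have hΛa : 0 < Λ (A a₀) := by
            by_contra hno
            push_neg at hno
            exact hPa ((hmem_iff a₀ ha₀).mpr hno)
          exact mul_pos hga₀ hΛa
      linarith
  calc 𝒜.card ≤ 𝒜.shatterer.card := h1
    _ ≤ ((Finset.range (dd + 3)).biUnion
          (fun i => (Finset.univ : Finset α).powersetCard i)).card := by
        apply Finset.card_le_card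
        intro s hs
        refine Finset.mem_biUnion.mpr ⟨s.card, ?_, ?_⟩
        · exact Finset.mem_range.mpr (Nat.lt_succ_of_le (le_trans (hvc s hs) (by omega)))
        · exact Finset.mem_powersetCard.mpr ⟨Finset.subset_univ s, rfl⟩
    _ ≤ ∑ i ∈ Finset.range (dd + 3), ((Finset.univ : Finset α).powersetCard i).card :=
        Finset.card_biUnion_le
    _ ≤ ∑ _i ∈ Finset.range (dd + 3), (Fintype.card α + 1) ^ (dd + 2) := by
        apply Finset.sum_le_sum
        intro i hi
        rw [Finset.card_powersetCard, Finset.card_univ]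
        calc (Fintype.card α).choose i ≤ (Fintype.card α) ^ i := Nat.choose_le_pow _ _
          _ ≤ (Fintype.card α + 1) ^ i := Nat.pow_le_pow_left (Nat.le_succ _) i
          _ ≤ (Fintype.card α + 1) ^ (dd + 2) := by
              apply Nat.pow_le_pow_right (Nat.succ_le_succ (Nat.zero_le _))
              exact Nat.lt_succ_iff.mp (Finset.mem_range.mp hi)
    _ = (dd + 3) * (Fintype.card α + 1) ^ (dd + 2) := by
        rw [Finset.sum_const, Finset.card_range, smul_eq_mul]


lemma five_k_le (k : ℕ) (hk : 5 ≤ k) : 5 * k + 1 ≤ 2 ^ k := by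
  induction k, hk using Nat.le_induction with
  | base => norm_num
  | succ k hk ih =>
      have h5 : 5 ≤ 2 ^ k := le_trans (by omega) ih
      rw [pow_succ]
      omega

lemma aux_numeric (k dd mm NN : ℕ) (hk : 5 ≤ k) (hdd : dd ≤ 2 ^ k) (hmm : mm ≤ 2 ^ k)
    (hNN : NN ≤ 2 ^ mm * (mm + 1) * (2 ^ (4 * k) - 1)) :
    (dd + 3) * (NN + 1) ^ (dd + 2) < 2 ^ (2 ^ (4 * k) - 1) := by
  have h5 := five_k_le k hk
  have hA1 : (1:ℕ) ≤ 2 ^ (2 ^ k) * 2 ^ (k + 1) :=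
    Nat.one_le_iff_ne_zero.mpr (by positivity)
  have hNN1 : NN + 1 ≤ 2 ^ (2 ^ k + 5 * k + 1) := by
    have hstep : NN ≤ 2 ^ (2 ^ k) * 2 ^ (k + 1) * (2 ^ (4 * k) - 1) := by
      calc NN ≤ 2 ^ mm * (mm + 1) * (2 ^ (4 * k) - 1) := hNN
        _ ≤ 2 ^ (2 ^ k) * 2 ^ (k + 1) * (2 ^ (4 * k) - 1) := by
            apply Nat.mul_le_mul_right
            apply Nat.mul_le_mul
            · exact Nat.pow_le_pow_right (by norm_num) hmm
            · calc mm + 1 ≤ 2 ^ k + 1 := by omega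
                _ ≤ 2 ^ (k + 1) := by
                    rw [pow_succ]
                    have := Nat.one_le_two_pow (n := k)
                    omega
    have hmul : 2 ^ (2 ^ k) * 2 ^ (k + 1) * (2 ^ (4 * k) - 1) + 2 ^ (2 ^ k) * 2 ^ (k + 1)
        = 2 ^ (2 ^ k) * 2 ^ (k + 1) * 2 ^ (4 * k) := by
      have h1 : (1:ℕ) ≤ 2 ^ (4 * k) := Nat.one_le_two_pow
      calc 2 ^ (2 ^ k) * 2 ^ (k + 1) * (2 ^ (4 * k) - 1) + 2 ^ (2 ^ k) * 2 ^ (k + 1)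
          = 2 ^ (2 ^ k) * 2 ^ (k + 1) * ((2 ^ (4 * k) - 1) + 1) := by ring
        _ = 2 ^ (2 ^ k) * 2 ^ (k + 1) * 2 ^ (4 * k) := by rw [Nat.sub_add_cancel h1]
    have : NN + 1 ≤ 2 ^ (2 ^ k) * 2 ^ (k + 1) * 2 ^ (4 * k) := by omega
    calc NN + 1 ≤ 2 ^ (2 ^ k) * 2 ^ (k + 1) * 2 ^ (4 * k) := this
      _ = 2 ^ (2 ^ k + 5 * k + 1) := by rw [← pow_add, ← pow_add]; ring_nf
  have hdd3 : dd + 3 ≤ 2 ^ (k + 2) := by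
    have : (3:ℕ) ≤ 3 * 2 ^ k := by
      have := Nat.one_le_two_pow (n := k); omega
    calc dd + 3 ≤ 2 ^ k + 3 := by omega
      _ ≤ 2 ^ k + 3 * 2 ^ k := by omega
      _ = 2 ^ (k + 2) := by ring
  have hmain : (dd + 3) * (NN + 1) ^ (dd + 2)
      ≤ 2 ^ (k + 2 + (2 ^ k + 5 * k + 1) * (dd + 2)) := by
    calc (dd + 3) * (NN + 1) ^ (dd + 2)
        ≤ 2 ^ (k + 2) * 2 ^ ((2 ^ k + 5 * k + 1) * (dd + 2)) := by
          apply Nat.mul_le_mul hdd3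
          calc (NN + 1) ^ (dd + 2) ≤ (2 ^ (2 ^ k + 5 * k + 1)) ^ (dd + 2) :=
                Nat.pow_le_pow_left hNN1 _
            _ = 2 ^ ((2 ^ k + 5 * k + 1) * (dd + 2)) := by rw [← pow_mul]
      _ = 2 ^ (k + 2 + (2 ^ k + 5 * k + 1) * (dd + 2)) := by rw [← pow_add]
  have hexp : k + 2 + (2 ^ k + 5 * k + 1) * (dd + 2) < 2 ^ (4 * k) - 1 := by
    have he1 : 2 ^ k + 5 * k + 1 ≤ 2 ^ (k + 1) := by
      rw [pow_succ]; omega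
    have he2 : dd + 2 ≤ 2 ^ (k + 2) := by omega
    have he3 : (2 ^ k + 5 * k + 1) * (dd + 2) ≤ 2 ^ (k + 1) * 2 ^ (k + 2) :=
      Nat.mul_le_mul he1 he2
    have he4 : 2 ^ (k + 1) * 2 ^ (k + 2) = 2 ^ (2 * k + 3) := by
      rw [← pow_add]; ring_nf
    have he5 : k + 2 ≤ 2 ^ (2 * k + 3) := by
      calc k + 2 ≤ 2 ^ k + 2 ^ k := by
            have := Nat.lt_two_pow_self (n := k); omega
        _ = 2 ^ (k + 1) := by ring
        _ ≤ 2 ^ (2 * k + 3) := Nat.pow_le_pow_right (by norm_num) (by omega)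
    have he6 : 2 ^ (2 * k + 3) + 2 ^ (2 * k + 3) = 2 ^ (2 * k + 4) := by ring
    have he7 : 2 * k + 4 ≤ 4 * k - 1 := by omega
    have he8 : 2 ^ (2 * k + 4) ≤ 2 ^ (4 * k - 1) := Nat.pow_le_pow_right (by norm_num) he7
    have he9 : 2 ^ (4 * k - 1) + 2 ^ (4 * k - 1) = 2 ^ (4 * k) := by
      set j := 4 * k - 1 with hjdef
      have hj : 4 * k = j + 1 := by omega
      rw [hj, pow_succ]; ring
    have he10 : 2 ≤ 2 ^ (4 * k - 1) := by
      calc (2:ℕ) = 2 ^ 1 := by norm_num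
        _ ≤ 2 ^ (4 * k - 1) := Nat.pow_le_pow_right (by norm_num) (by omega)
    omega
  calc (dd + 3) * (NN + 1) ^ (dd + 2)
      ≤ 2 ^ (k + 2 + (2 ^ k + 5 * k + 1) * (dd + 2)) := hmain
    _ < 2 ^ (2 ^ (4 * k) - 1) := Nat.pow_lt_pow_right (by norm_num) hexp

lemma bridge_real (Av Ag Ah θ ts gt : ℝ) (hT : 0 < ts + gt) :
    (Av + ts * (Ah - θ) + (Ag + gt * (Ah - θ)) ≤ 0) ↔
      (Ah + (ts + gt)⁻¹ * (Av + Ag) ≤ θ) := by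
  have hne : ts + gt ≠ 0 := ne_of_gt hT
  constructor
  · intro hle
    have hle' : (Av + Ag) + (ts + gt) * (Ah - θ) ≤ 0 := by linarith [hle]; 
    have h2 : (ts + gt)⁻¹ * ((Av + Ag) + (ts + gt) * (Ah - θ)) ≤ 0 :=
      mul_nonpos_iff.mpr (Or.inl ⟨inv_nonneg.mpr hT.le, hle'⟩)
    have h3 : (ts + gt)⁻¹ * ((Av + Ag) + (ts + gt) * (Ah - θ))
        = (ts + gt)⁻¹ * (Av + Ag) + (Ah - θ) := by
      field_simp
    rw [h3] at h2
    linarith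
  · intro hle
    have h2 : (ts + gt) * (Ah + (ts + gt)⁻¹ * (Av + Ag)) ≤ (ts + gt) * θ :=
      mul_le_mul_of_nonneg_left hle hT.le
    have h3 : (ts + gt) * (Ah + (ts + gt)⁻¹ * (Av + Ag))
        = (ts + gt) * Ah + (Av + Ag) := by
      field_simp
    rw [h3] at h2
    nlinarith [h2]
set_option maxHeartbeats 2000000 in
theorem no_small_one_layer_transformer_computes_sum2
    (d m : ℕ → ℕ)
    (T : (n : ℕ) → Transformer n (d n) {z : ℤ // z ∈ Finset.Icc (-(n : ℤ)) (n : ℤ)})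
    (hMLP : ∀ n : ℕ, 2 ≤ n → Even n → IsReLUMLP (d n) (m n) ((T n).N))
    (hsmall : ∀ c : ℝ, 0 < c → ∃ N₀ : ℕ, ∀ n : ℕ, N₀ ≤ n → Even n →
      (d n : ℝ) ≤ (n : ℝ) ^ c ∧ (m n : ℝ) ≤ (n : ℝ) ^ c) :
    ∃ n : ℕ, 2 ≤ n ∧ Even n ∧
      ∃ x : Fin n → {z : ℤ // z ∈ Finset.Icc (-(n : ℤ)) (n : ℤ)},
        (T n).output x ≠ sum2 (fun i => (x i : ℤ)) := by
  classical
  by_contra hcon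
  push_neg at hcon
  obtain ⟨N₀, hN₀⟩ := hsmall (1/4) (by norm_num)
  set k := max 5 N₀ with hkdef
  have hk5 : 5 ≤ k := le_max_left _ _
  set nn := 2 ^ (4 * k) - 1 with hnndef
  have hone : (1:ℕ) ≤ 2 ^ (4 * k) := Nat.one_le_two_pow
  have hpow : nn + 1 = 2 ^ (4 * k) := by omega
  have hsplit : 2 ^ (4 * k - 1) + 2 ^ (4 * k - 1) = 2 ^ (4 * k) := by
    set j := 4 * k - 1 with hjdef
    have hj : 4 * k = j + 1 := by omega
    rw [hj, pow_succ]
    ring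
  have h2n : 2 ≤ nn + 1 := by
    have : 2 ^ 1 ≤ 2 ^ (4 * k) := Nat.pow_le_pow_right (by norm_num) (by omega)
    omega
  have heven : Even (nn + 1) := ⟨2 ^ (4 * k - 1), by omega⟩
  have hnN₀ : N₀ ≤ nn + 1 := by
    have h1 : N₀ ≤ k := le_max_right _ _
    have h2 : k < 2 ^ k := Nat.lt_two_pow_self
    have h3 : 2 ^ k ≤ 2 ^ (4 * k) := Nat.pow_le_pow_right (by norm_num) (by omega)
    omega
  obtain ⟨hdR, hmR⟩ := hN₀ (nn + 1) hnN₀ heven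
  have hn4 : (((nn + 1 : ℕ)) : ℝ) ^ ((1:ℝ)/4) = ((2 ^ k : ℕ) : ℝ) := by
    have h1 : (((nn + 1 : ℕ)) : ℝ) = (2:ℝ) ^ (((4 * k : ℕ)) : ℝ) := by
      rw [hpow, Real.rpow_natCast]
      norm_cast
    rw [h1, ← Real.rpow_mul (by norm_num : (0:ℝ) ≤ 2)]
    have h2 : (((4 * k : ℕ)) : ℝ) * ((1:ℝ)/4) = ((k : ℕ) : ℝ) := by push_cast; ring
    rw [h2, Real.rpow_natCast]
    push_cast
    ring
  have hdk : d (nn + 1) ≤ 2 ^ k := by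
    have h := hdR
    rw [hn4] at h
    exact_mod_cast h
  have hmk : m (nn + 1) ≤ 2 ^ k := by
    have h := hmR
    rw [hn4] at h
    exact_mod_cast h
  -- the transformer at length nn+1
  obtain ⟨ι, hfin, W, hcard, hdet⟩ := (hMLP (nn + 1) h2n heven).sign_det
  -- tokens
  have hmemb : ∀ i : Fin nn, ((i : ℤ) + 1) ∈
      Finset.Icc (-((nn + 1 : ℕ) : ℤ)) ((nn + 1 : ℕ) : ℤ) := by
    intro i
    have hi := i.isLt
    simp only [Finset.mem_Icc]
    omega
  have hmemn : (((nn + 1 : ℕ)) : ℤ) ∈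
      Finset.Icc (-((nn + 1 : ℕ) : ℤ)) ((nn + 1 : ℕ) : ℤ) := by
    simp only [Finset.mem_Icc]
    omega
  have hmems : ∀ v : Fin nn, (-((v : ℤ) + 1)) ∈
      Finset.Icc (-((nn + 1 : ℕ) : ℤ)) ((nn + 1 : ℕ) : ℤ) := by
    intro v
    have hv := v.isLt
    simp only [Finset.mem_Icc]
    omega
  set btok : Finset (Fin nn) → Fin nn →
      {z : ℤ // z ∈ Finset.Icc (-((nn + 1 : ℕ) : ℤ)) ((nn + 1 : ℕ) : ℤ)} :=
    fun V i => if i ∈ V then ⟨(i : ℤ) + 1, hmemb i⟩ else ⟨((nn + 1 : ℕ) : ℤ), hmemn⟩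
    with hbtokdef
  set σtok : Fin nn →
      {z : ℤ // z ∈ Finset.Icc (-((nn + 1 : ℕ) : ℤ)) ((nn + 1 : ℕ) : ℤ)} :=
    fun v => ⟨-((v : ℤ) + 1), hmems v⟩ with hstokdef
  set xin : Finset (Fin nn) → Fin nn → (Fin (nn + 1) →
      {z : ℤ // z ∈ Finset.Icc (-((nn + 1 : ℕ) : ℤ)) ((nn + 1 : ℕ) : ℤ)}) :=
    fun V v => Fin.lastCases (σtok v) (btok V) with hxindef
  have hxc : ∀ V v (i : Fin nn), xin V v (Fin.castSucc i) = btok V i := by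
    intro V v i
    simp only [hxindef]
    exact Fin.lastCases_castSucc ..
  have hxl : ∀ V v, xin V v (Fin.last nn) = σtok v := by
    intro V v
    simp only [hxindef]
    exact Fin.lastCases_last ..
  have hbpos : ∀ V (i : Fin nn), 1 ≤ ((btok V i : ℤ)) := by
    intro V i
    simp only [hbtokdef]
    split_ifs <;> simp
  -- sum2 on these inputs
  have hsum2 : ∀ V v, ((∃ i j : Fin (nn + 1),
      ((xin V v i : ℤ)) + ((xin V v j : ℤ)) = 0) ↔ v ∈ V) := by
    intro V v
    constructor
    · rintro ⟨i, j, hij⟩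
      rcases Fin.eq_castSucc_or_eq_last i with ⟨i', rfl⟩ | rfl <;>
        rcases Fin.eq_castSucc_or_eq_last j with ⟨j', rfl⟩ | rfl
      · rw [hxc, hxc] at hij
        have h1 := hbpos V i'
        have h2 := hbpos V j'
        omega
      · rw [hxc, hxl] at hij
        simp only [hstokdef] at hij
        have hb : ((btok V i' : ℤ)) = (v : ℤ) + 1 := by omega
        simp only [hbtokdef] at hb
        by_cases hiV : i' ∈ V
        · rw [if_pos hiV] at hb
          simp only at hb
          have : i' = v := by
            apply Fin.ext
            omega
          rwa [this] at hiV
        · rw [if_neg hiV] at hb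
          simp only at hb
          have hv := v.isLt
          omega
      · rw [hxl, hxc] at hij
        simp only [hstokdef] at hij
        have hb : ((btok V j' : ℤ)) = (v : ℤ) + 1 := by omega
        simp only [hbtokdef] at hb
        by_cases hjV : j' ∈ V
        · rw [if_pos hjV] at hb
          simp only at hb
          have : j' = v := by
            apply Fin.ext
            omega
          rwa [this] at hjV
        · rw [if_neg hjV] at hb
          simp only at hb
          have hv := v.isLt
          omega
      · rw [hxl] at hij
        simp only [hstokdef] at hij
        omega
    · intro hv
      refine ⟨Fin.castSucc v, Fin.last nn, ?_⟩
      rw [hxc, hxl]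
      simp only [hbtokdef, hstokdef, if_pos hv]
      ring
  -- output decomposition
  set wf : Fin (nn + 1) →
      {z : ℤ // z ∈ Finset.Icc (-((nn + 1 : ℕ) : ℤ)) ((nn + 1 : ℕ) : ℤ)} → ℝ :=
    fun i s => Real.exp (((T (nn + 1)).K.mulVec ((T (nn + 1)).p i s)) ⬝ᵥ
      ((T (nn + 1)).Q.mulVec (T (nn + 1)).h)) with hwfdef
  have hw : ∀ (x : Fin (nn + 1) →
      {z : ℤ // z ∈ Finset.Icc (-((nn + 1 : ℕ) : ℤ)) ((nn + 1 : ℕ) : ℤ)}) i,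
      (T (nn + 1)).w x i = wf i (x i) := fun _ _ => rfl
  set vsum : Finset (Fin nn) → (Fin (d (nn + 1)) → ℝ) :=
    fun V => ∑ i : Fin nn, wf (Fin.castSucc i) (btok V i) •
      (T (nn + 1)).p (Fin.castSucc i) (btok V i) with hvsumdef
  set tsum : Finset (Fin nn) → ℝ :=
    fun V => ∑ i : Fin nn, wf (Fin.castSucc i) (btok V i) with htsumdef
  set gv : Fin nn → (Fin (d (nn + 1)) → ℝ) :=
    fun v => wf (Fin.last nn) (σtok v) • (T (nn + 1)).p (Fin.last nn) (σtok v) with hgvdef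
  set gt : Fin nn → ℝ := fun v => wf (Fin.last nn) (σtok v) with hgtdef
  have htpos : ∀ V v, 0 < tsum V + gt v := by
    intro V v
    have h1 : 0 ≤ tsum V := by
      rw [htsumdef]
      exact Finset.sum_nonneg fun i _ => (Real.exp_pos _).le
    have h2 : 0 < gt v := by
      rw [hgtdef]
      exact Real.exp_pos _
    linarith
  have hout : ∀ V v, (T (nn + 1)).output (xin V v) =
      if 0 < (T (nn + 1)).N ((T (nn + 1)).h +
        (tsum V + gt v)⁻¹ • (vsum V + gv v)) then 1 else 0 := by
    intro V v
    unfold Transformer.output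
    have h1 : ∑ i, (T (nn + 1)).w (xin V v) i = tsum V + gt v := by
      rw [htsumdef, hgtdef, Fin.sum_univ_castSucc]
      congr 1
      · apply Finset.sum_congr rfl
        intro i _
        rw [hw, hxc]
      · rw [hw, hxl]
    have h2 : ∑ i, (T (nn + 1)).w (xin V v) i • (T (nn + 1)).p i (xin V v i)
        = vsum V + gv v := by
      rw [hvsumdef, hgvdef, Fin.sum_univ_castSucc]
      congr 1
      · apply Finset.sum_congr rfl
        intro i _
        rw [hw, hxc]
      · rw [hw, hxl]
    rw [h1, h2]
  have hbit : ∀ V v, ((0 < (T (nn + 1)).N ((T (nn + 1)).h +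
      (tsum V + gt v)⁻¹ • (vsum V + gv v))) ↔ v ∈ V) := by
    intro V v
    have hc := hcon (nn + 1) h2n heven (xin V v)
    rw [hout V v] at hc
    constructor
    · intro hpos
      by_contra hv
      rw [if_pos hpos] at hc
      have hz : sum2 (fun i => ((xin V v i : ℤ))) = 0 := by
        unfold sum2
        rw [if_neg]
        intro hex
        exact hv ((hsum2 V v).mp hex)
      rw [hz] at hc
      exact one_ne_zero hc
    · intro hv
      by_contra hpos
      rw [if_neg hpos] at hc
      have hz : sum2 (fun i => ((xin V v i : ℤ))) = 1 := by
        unfold sum2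
        rw [if_pos]
        exact (hsum2 V v).mpr hv
      rw [hz] at hc
      exact zero_ne_one hc
  -- atoms in the (v,t)-sum space
  set Aat : ((ι × Fin (m (nn + 1) + 1)) × Fin nn) → ((Fin (d (nn + 1)) → ℝ) × ℝ × ℝ) :=
    fun q => ((W q.1).1, (W q.1).1 ⬝ᵥ (T (nn + 1)).h - (W q.1).2,
      (W q.1).1 ⬝ᵥ (gv q.2) + gt q.2 * ((W q.1).1 ⬝ᵥ (T (nn + 1)).h - (W q.1).2))
    with hAatdef
  have hbridge : ∀ (q : (ι × Fin (m (nn + 1) + 1)) × Fin nn) (V : Finset (Fin nn)),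
      (((Aat q).1 ⬝ᵥ (vsum V) + (tsum V) * (Aat q).2.1 + (Aat q).2.2 ≤ 0)
      ↔ ((W q.1).1 ⬝ᵥ ((T (nn + 1)).h + (tsum V + gt q.2)⁻¹ • (vsum V + gv q.2))
          ≤ (W q.1).2)) := by
    intro q V
    have hT : 0 < tsum V + gt q.2 := htpos V q.2
    rw [hAatdef]
    dsimp only
    simp only [dotProduct_add, dotProduct_smul, smul_eq_mul]
    exact bridge_real _ _ _ _ _ _ hT
  -- the pattern map is injective
  set patt : Finset (Fin nn) → Finset ((ι × Fin (m (nn + 1) + 1)) × Fin nn) :=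
    fun V => Finset.univ.filter (fun q =>
      (Aat q).1 ⬝ᵥ (vsum V) + (tsum V) * (Aat q).2.1 + (Aat q).2.2 ≤ 0) with hpattdef
  have hinj : Function.Injective patt := by
    intro V V' hVV'
    have hbits : ∀ v : Fin nn, (v ∈ V ↔ v ∈ V') := by
      intro v
      rw [← hbit V v, ← hbit V' v]
      apply hdet
      intro ji
      have hq : (((ji, v) ∈ patt V) ↔ ((ji, v) ∈ patt V')) := by rw [hVV']
      rw [hpattdef] at hq
      simp only [Finset.mem_filter, Finset.mem_univ, true_and] at hq
      rw [← hbridge (ji, v) V, ← hbridge (ji, v) V']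
      exact hq
    ext v
    exact hbits v
  -- counting
  set 𝒜 : Finset (Finset ((ι × Fin (m (nn + 1) + 1)) × Fin nn)) :=
    Finset.univ.filter (fun S => ∃ u : (Fin (d (nn + 1)) → ℝ) × ℝ,
      ∀ q, (q ∈ S ↔ (Aat q).1 ⬝ᵥ u.1 + u.2 * (Aat q).2.1 + (Aat q).2.2 ≤ 0)) with h𝒜def
  have hmem𝒜 : ∀ V, patt V ∈ 𝒜 := by
    intro V
    rw [h𝒜def]
    refine Finset.mem_filter.mpr ⟨Finset.mem_univ _, ⟨(vsum V, tsum V), ?_⟩⟩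
    intro q
    rw [hpattdef]
    simp only [Finset.mem_filter, Finset.mem_univ, true_and]
  have hcount : 2 ^ nn ≤ 𝒜.card := by
    have h1 : (Finset.univ : Finset (Finset (Fin nn))).card ≤ 𝒜.card :=
      Finset.card_le_card_of_injOn patt (fun V _ => hmem𝒜 V) (Function.Injective.injOn hinj)
    rwa [Finset.card_univ, Fintype.card_finset, Fintype.card_fin] at h1
  have hbound := pattern_count Aat 𝒜 (fun S hS => by
    rw [h𝒜def] at hS
    exact (Finset.mem_filter.mp hS).2)
  have hNαle : Fintype.card ((ι × Fin (m (nn + 1) + 1)) × Fin nn)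
      ≤ 2 ^ (m (nn + 1)) * (m (nn + 1) + 1) * (2 ^ (4 * k) - 1) := by
    have h1 : Fintype.card ((ι × Fin (m (nn + 1) + 1)) × Fin nn)
        = Fintype.card ι * (m (nn + 1) + 1) * nn := by
      simp [Fintype.card_prod]
    rw [h1]
    have hnnle : nn ≤ 2 ^ (4 * k) - 1 := le_of_eq hnndef
    exact Nat.mul_le_mul (Nat.mul_le_mul hcard (le_refl _)) hnnle
  have hnum := aux_numeric k (d (nn + 1)) (m (nn + 1))
    (Fintype.card ((ι × Fin (m (nn + 1) + 1)) × Fin nn)) hk5 hdk hmk hNαle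
  have hchain : (2:ℕ) ^ nn < 2 ^ nn := by
    calc (2:ℕ) ^ nn ≤ 𝒜.card := hcount
      _ ≤ (d (nn + 1) + 3) * (Fintype.card ((ι × Fin (m (nn + 1) + 1)) × Fin nn) + 1)
            ^ (d (nn + 1) + 2) := hbound
      _ < 2 ^ (2 ^ (4 * k) - 1) := hnum
      _ = 2 ^ nn := by rw [← hnndef]
  exact lt_irrefl _ hchain
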